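/- Let f : [0,∞) → ℝ be nonnegative and continuous, with ∫₀^∞ f(t) dt < ∞, and suppose f satisfies the growth bound f(t') ≤ (f(t)^{1/2} + C(t'-t))² for all t' ≥ t ≥ 0 and some constant C > 0. Then f(t) → 0 as t → ∞. -/

import Mathlib

open MeasureTheory Set Filter

theorem tendsto_zero_of_integrable_of_growth (f : ℝ → ℝ) (C : ℝ) (hC : 0 < C)
    (hf0 : ∀ t, 0 ≤ t → 0 ≤ f t)
    (hcont : ContinuousOn f (Set.Ici 0))
    (hint : MeasureTheory.IntegrableOn f (Set.Ici 0))
    (hgrowth : ∀ t t', 0 ≤ t → t ≤ t' →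
      f t' ≤ (Real.sqrt (f t) + C * (t' - t)) ^ 2) :
    Filter.Tendsto f Filter.atTop (nhds 0) := by
  have hint0 : IntegrableOn f (Ioi 0) := hint.mono_set Ioi_subset_Ici_self
  -- the tail integral tends to 0
  have htail : Tendsto (fun b => ∫ x in Ioi b, f x) atTop (nhds 0) := by
    have h1 : Tendsto (fun b => ∫ x in (0:ℝ)..b, f x) atTop
        (nhds (∫ x in Ioi (0:ℝ), f x)) :=
      MeasureTheory.intervalIntegral_tendsto_integral_Ioi 0 hint0 tendsto_id
    have h2 : ∀ᶠ b in atTop, (∫ x in Ioi b, f x)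
        = (∫ x in Ioi (0:ℝ), f x) - ∫ x in (0:ℝ)..b, f x := by
      filter_upwards [eventually_ge_atTop (0:ℝ)] with b hb
      rw [intervalIntegral.integral_of_le hb]
      have hsplit : (∫ x in Ioi (0:ℝ), f x)
          = (∫ x in Ioc (0:ℝ) b, f x) + ∫ x in Ioi b, f x := by
        rw [← Set.Ioc_union_Ioi_eq_Ioi hb,
          MeasureTheory.setIntegral_union (Set.Ioc_disjoint_Ioi le_rfl) measurableSet_Ioi
            (hint0.mono_set Set.Ioc_subset_Ioi_self)
            (hint0.mono_set (Set.Ioi_subset_Ioi hb))]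
      linarith
    rw [Filter.tendsto_congr' h2]
    have := (tendsto_const_nhds (x := ∫ x in Ioi (0:ℝ), f x) (f := atTop)).sub h1
    simpa using this
  by_contra hcon
  rw [Metric.tendsto_atTop] at hcon
  push_neg at hcon
  obtain ⟨ε, hε, hfreq⟩ := hcon
  set δ := Real.sqrt ε / (2 * C) with hδdef
  have hsqε : 0 < Real.sqrt ε := Real.sqrt_pos.mpr hε
  have hδ : 0 < δ := div_pos hsqε (by linarith)
  have hc : 0 < δ * (ε / 4) := mul_pos hδ (by linarith)
  obtain ⟨b, hbtail, hb0⟩ :=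
    ((htail.eventually (gt_mem_nhds hc)).and (eventually_ge_atTop (0:ℝ))).exists
  obtain ⟨t, ht, hft⟩ := hfreq (b + δ)
  rw [Real.dist_eq, sub_zero] at hft
  have ht0 : 0 ≤ t := by linarith
  have hfε : ε ≤ f t := by rwa [abs_of_nonneg (hf0 t ht0)] at hft
  have hCδ : C * δ = Real.sqrt ε / 2 := by
    rw [hδdef]; field_simp
  -- pointwise lower bound on (t-δ, t]
  have hlow : ∀ s ∈ Set.Ioc (t - δ) t, ε / 4 ≤ f s := by
    intro s hs
    have hs1 : t - δ < s := hs.1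
    have hst : s ≤ t := hs.2
    have hs0 : 0 ≤ s := by linarith
    have hg := hgrowth s t hs0 hst
    have hsq : Real.sqrt (f t) ≤ Real.sqrt (f s) + C * (t - s) := by
      have h0 : 0 ≤ Real.sqrt (f s) + C * (t - s) := by
        have := Real.sqrt_nonneg (f s); nlinarith
      calc Real.sqrt (f t) ≤ Real.sqrt ((Real.sqrt (f s) + C * (t - s)) ^ 2) :=
            Real.sqrt_le_sqrt hg
        _ = Real.sqrt (f s) + C * (t - s) := by
            rw [Real.sqrt_sq h0]
    have h1 : Real.sqrt ε ≤ Real.sqrt (f t) := Real.sqrt_le_sqrt hfε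
    have h2 : C * (t - s) ≤ C * δ := by nlinarith
    have h3 : Real.sqrt ε / 2 ≤ Real.sqrt (f s) := by
      rw [hCδ] at h2; linarith
    have h4 : (Real.sqrt ε / 2) ^ 2 ≤ (Real.sqrt (f s)) ^ 2 := by
      have := Real.sqrt_nonneg (f s); nlinarith
    rw [Real.sq_sqrt (hf0 s hs0), div_pow, Real.sq_sqrt hε.le] at h4
    linarith [h4]
  -- integral bounds
  have hsub : Set.Ioc (t - δ) t ⊆ Set.Ioi b := fun s hs => by
    have : b ≤ t - δ := by linarith
    exact lt_of_le_of_lt this hs.1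
  have hintIoc : IntegrableOn f (Set.Ioc (t - δ) t) :=
    (hint0.mono_set (Set.Ioi_subset_Ioi hb0)).mono_set hsub
  have hmeas : (MeasureTheory.volume (Set.Ioc (t - δ) t)).toReal = δ := by
    rw [Real.volume_Ioc, ENNReal.toReal_ofReal (by linarith)]; ring
  have hlb : δ * (ε / 4) ≤ ∫ x in Set.Ioc (t - δ) t, f x := by
    have := MeasureTheory.setIntegral_ge_of_const_le measurableSet_Ioc
      (by rw [Real.volume_Ioc]; exact ENNReal.ofReal_ne_top) hlow hintIoc
    rw [MeasureTheory.measureReal_def, hmeas, smul_eq_mul] at this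
    linarith [this]
  have hmono : (∫ x in Set.Ioc (t - δ) t, f x) ≤ ∫ x in Set.Ioi b, f x := by
    apply MeasureTheory.setIntegral_mono_set
      (hint0.mono_set (Set.Ioi_subset_Ioi hb0))
    · refine (MeasureTheory.ae_restrict_iff' measurableSet_Ioi).mpr (ae_of_all _ ?_)
      intro x hx
      exact hf0 x (le_of_lt (lt_of_le_of_lt hb0 hx))
    · exact HasSubset.Subset.eventuallyLE hsub
  linarith [hbtail]
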